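/- Let (Ω, F, P) be a probability space with a filtration (F_t)_{t ∈ [0,T]}, T > 0, and let Z : [0, T] × Ω → ℝ be product measurable with E[∫₀ᵀ |Z(s)|² ds] < ∞. Let δ > 0 and M ≥ 0, and suppose that for every pair of stopping times τ₁ ≤ τ₂ ≤ T with τ₂ − τ₁ ≤ δ almost surely and every stopping time θ ≤ τ₁, one has E[∫_{τ₁}^{τ₂} |Z(s)|² ds | F_θ] ≤ M almost surely. Then for every stopping time τ ≤ T, E[∫_τ^T |Z(s)|² ds | F_τ] ≤ (⌊T/δ⌋ + 1) · M almost surely. In particular, the bound sup_τ E[∫_τ^T |Z(s)|² ds | F_τ] < ∞ over all stopping times τ bounded by T holds. -/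

import Mathlib

open MeasureTheory ProbabilityTheory

private lemma meas_lint_aux {Ω : Type*} {m0 : MeasurableSpace Ω}
    (Z : ℝ → Ω → ℝ) (hZ : Measurable (Function.uncurry Z))
    {u v : Ω → ℝ} (hu : Measurable u) (hv : Measurable v) :
    Measurable fun ω => ∫⁻ s in Set.Ioc (u ω) (v ω), ENNReal.ofReal (|Z s ω| ^ 2) := by
  have h1 : ∀ ω, (∫⁻ s in Set.Ioc (u ω) (v ω), ENNReal.ofReal (|Z s ω| ^ 2))
      = ∫⁻ s, Set.indicator (Set.Ioc (u ω) (v ω)) (fun s => ENNReal.ofReal (|Z s ω| ^ 2)) s :=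
    fun ω => (lintegral_indicator measurableSet_Ioc _).symm
  simp_rw [h1, Set.indicator_apply, Set.mem_Ioc]
  apply Measurable.lintegral_prod_right
    (f := fun ω s => if u ω < s ∧ s ≤ v ω then ENNReal.ofReal (|Z s ω| ^ 2) else 0)
  refine Measurable.ite ?_ ?_ measurable_const
  · exact ((measurableSet_lt (hu.comp measurable_fst) measurable_snd).inter
      (measurableSet_le measurable_snd (hv.comp measurable_fst)))
  · exact ((hZ.comp (measurable_snd.prodMk measurable_fst)).abs.pow_const 2).ennreal_ofReal

theorem bmo_patching
    {Ω : Type*} {m0 : MeasurableSpace Ω} (P : Measure Ω) [IsProbabilityMeasure P]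
    (F : Filtration ℝ m0) (T δ M : ℝ) (hT : 0 < T) (hδ : 0 < δ) (hM : 0 ≤ M)
    (Z : ℝ → Ω → ℝ) (hZmeas : Measurable (Function.uncurry Z))
    (hZint : ∫⁻ ω, (∫⁻ s in Set.Ioc (0 : ℝ) T, ENNReal.ofReal (|Z s ω| ^ 2)) ∂P < ⊤)
    (hsmall : ∀ (τ₁ τ₂ θ : Ω → ℝ),
      IsStoppingTime F (fun ω => (τ₁ ω : WithTop ℝ)) → IsStoppingTime F (fun ω => (τ₂ ω : WithTop ℝ)) →
      ∀ hθ : IsStoppingTime F (fun ω => (θ ω : WithTop ℝ)),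
      (∀ ω, τ₁ ω ∈ Set.Icc (0 : ℝ) T) → (∀ ω, τ₂ ω ∈ Set.Icc (0 : ℝ) T) →
      (∀ ω, τ₁ ω ≤ τ₂ ω) → (∀ ω, τ₂ ω - τ₁ ω ≤ δ) → (∀ ω, θ ω ≤ τ₁ ω) →
      ∀ᵐ ω ∂P,
        (P[(fun ω' => ∫ s in Set.Ioc (τ₁ ω') (τ₂ ω'), |Z s ω'| ^ 2) |
            hθ.measurableSpace]) ω ≤ M) :
    ∀ (τ : Ω → ℝ) (hτ : IsStoppingTime F (fun ω => (τ ω : WithTop ℝ))), (∀ ω, τ ω ∈ Set.Icc (0 : ℝ) T) →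
      ∀ᵐ ω ∂P,
        (P[(fun ω' => ∫ s in Set.Ioc (τ ω') T, |Z s ω'| ^ 2) |
            hτ.measurableSpace]) ω ≤ ((Nat.floor (T / δ) : ℝ) + 1) * M := by
  intro τ hτ hτT
  set N : ℕ := Nat.floor (T / δ) with hN
  set a : ℕ → Ω → ℝ := fun k ω => min (τ ω + k * δ) T with ha
  have hτ0 : ∀ ω, 0 ≤ τ ω := fun ω => (hτT ω).1
  have hτle : ∀ ω, τ ω ≤ T := fun ω => (hτT ω).2
  have ha_st : ∀ k, IsStoppingTime F (fun ω => (a k ω : WithTop ℝ)) := fun k => by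
    have h := (hτ.add_const (by positivity : (0:ℝ) ≤ (k : ℝ) * δ)).min_const T
    have e : (fun ω => ((a k ω : ℝ) : WithTop ℝ)) = fun ω => min ((τ ω : WithTop ℝ) + ((k * δ : ℝ) : WithTop ℝ)) (T : WithTop ℝ) := by
      funext ω
      simp [a, WithTop.coe_min, WithTop.coe_add]
    rw [e]
    exact h
  have ha_mem : ∀ k ω, a k ω ∈ Set.Icc (0:ℝ) T := by
    intro k ω
    constructor
    · exact le_min (add_nonneg (hτ0 ω) (by positivity)) hT.le
    · exact min_le_right _ _
  have ha_mono : ∀ k ω, a k ω ≤ a (k+1) ω := by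
    intro k ω
    refine min_le_min ?_ le_rfl
    have : (k : ℝ) * δ ≤ ((k : ℝ) + 1) * δ := by nlinarith
    push_cast
    linarith
  have ha_monoω : ∀ ω, Monotone fun k => a k ω :=
    fun ω => monotone_nat_of_le_succ (fun k => ha_mono k ω)
  have ha_diff : ∀ k ω, a (k+1) ω - a k ω ≤ δ := by
    intro k ω
    have h1 : a (k+1) ω ≤ min (τ ω + (k:ℝ) * δ + δ) (T + δ) := by
      refine min_le_min (le_of_eq ?_) (by linarith)
      push_cast; ring
    rw [min_add_add_right] at h1
    simp only [a] at *
    linarith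
  have hτa : ∀ k ω, τ ω ≤ a k ω := by
    intro k ω
    exact le_min (le_add_of_nonneg_right (by positivity)) (hτle ω)
  have ha0 : ∀ ω, a 0 ω = τ ω := by
    intro ω; simp [a, hτle ω]
  have haN : ∀ ω, a (N+1) ω = T := by
    intro ω
    have h1 : T / δ < (N : ℝ) + 1 := Nat.lt_floor_add_one _
    have h2 : T ≤ ((N:ℝ) + 1) * δ := by
      rw [div_lt_iff₀ hδ] at h1; linarith
    refine min_eq_right ?_
    push_cast
    nlinarith [hτ0 ω]
  have hτmeas : Measurable τ := by
    have h := ((hτ.measurable_of_le (fun ω => WithTop.coe_le_coe.mpr (hτle ω))).untopD 0).mono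
      (F.le T) le_rfl
    simpa using h
  have ha_meas : ∀ k, Measurable (a k) :=
    fun k => (hτmeas.add_const _).min measurable_const
  have hZω : ∀ ω, Measurable fun s => Z s ω := fun ω =>
    hZmeas.comp (measurable_id.prodMk measurable_const)
  -- lintegral pieces
  set L : ℕ → Ω → ENNReal :=
    fun k ω => ∫⁻ s in Set.Ioc (a k ω) (a (k+1) ω), ENNReal.ofReal (|Z s ω| ^ 2) with hL
  set G₀ : Ω → ENNReal :=
    fun ω => ∫⁻ s in Set.Ioc (0:ℝ) T, ENNReal.ofReal (|Z s ω| ^ 2) with hG₀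
  set g : ℕ → Ω → ℝ :=
    fun k ω => ∫ s in Set.Ioc (a k ω) (a (k+1) ω), |Z s ω| ^ 2 with hg
  have hG₀meas : Measurable G₀ :=
    meas_lint_aux Z hZmeas measurable_const measurable_const
  have hG₀lt : ∀ᵐ ω ∂P, G₀ ω < ⊤ := ae_lt_top hG₀meas hZint.ne
  have hLG : ∀ k ω, L k ω ≤ G₀ ω := fun k ω =>
    lintegral_mono_set (Set.Ioc_subset_Ioc (ha_mem k ω).1 (ha_mem (k+1) ω).2)
  have hLmeas : ∀ k, Measurable (L k) :=
    fun k => meas_lint_aux Z hZmeas (ha_meas k) (ha_meas (k+1))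
  have g_eq : ∀ k ω, g k ω = (L k ω).toReal := by
    intro k ω
    rw [hg, hL]
    exact integral_eq_lintegral_of_nonneg_ae
      (Filter.Eventually.of_forall fun s => by positivity)
      (((hZω ω).abs.pow_const 2).aestronglyMeasurable)
  have hgmeas : ∀ k, Measurable (g k) := by
    intro k
    have : g k = fun ω => (L k ω).toReal := by funext ω; exact g_eq k ω
    rw [this]
    exact (hLmeas k).ennreal_toReal
  set G : Ω → ℝ := fun ω => (G₀ ω).toReal with hG
  have hGmeas : Measurable G := hG₀meas.ennreal_toReal
  have hGint : Integrable G P := by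
    refine ⟨hGmeas.aestronglyMeasurable, ?_⟩
    show (∫⁻ ω, ‖G ω‖₊ ∂P) < ⊤
    refine lt_of_le_of_lt (lintegral_mono fun ω => ?_) hZint
    calc ((‖G ω‖₊ : ENNReal)) = ENNReal.ofReal ‖G ω‖ := (ofReal_norm _).symm
      _ = ENNReal.ofReal ((G₀ ω).toReal) := by
          rw [Real.norm_eq_abs, abs_of_nonneg ENNReal.toReal_nonneg]
      _ ≤ G₀ ω := ENNReal.ofReal_toReal_le
  have hgint : ∀ k, Integrable (g k) P := by
    intro k
    refine Integrable.mono' hGint (hgmeas k).aestronglyMeasurable ?_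
    filter_upwards [hG₀lt] with ω hω
    rw [g_eq k ω, Real.norm_eq_abs, abs_of_nonneg ENNReal.toReal_nonneg]
    exact ENNReal.toReal_mono hω.ne (hLG k ω)
  -- decomposition
  have hdecomp : ∀ᵐ ω ∂P,
      (fun ω' => ∫ s in Set.Ioc (τ ω') T, |Z s ω'| ^ 2) ω
        = (∑ k ∈ Finset.range (N+1), g k) ω := by
    filter_upwards [hG₀lt] with ω hω
    have hint : IntegrableOn (fun s => |Z s ω| ^ 2) (Set.Ioc (0:ℝ) T) := by
      refine ⟨((hZω ω).abs.pow_const 2).aestronglyMeasurable, ?_⟩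
      show (∫⁻ s in Set.Ioc (0:ℝ) T, ‖|Z s ω| ^ 2‖₊) < ⊤
      refine lt_of_le_of_lt (le_of_eq (lintegral_congr fun s => ?_)) hω
      rw [show ((‖|Z s ω| ^ 2‖₊ : ENNReal)) = ENNReal.ofReal ‖|Z s ω| ^ 2‖ from (ofReal_norm _).symm,
        Real.norm_eq_abs, abs_of_nonneg (by positivity)]
    have key : ∀ n, (∫ s in Set.Ioc (a 0 ω) (a n ω), |Z s ω| ^ 2)
        = ∑ k ∈ Finset.range n, g k ω := by
      intro n
      induction n with
      | zero => simp
      | succ n ih =>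
        rw [Finset.sum_range_succ, ← ih,
          ← Set.Ioc_union_Ioc_eq_Ioc (ha_monoω ω (Nat.zero_le n)) (ha_mono n ω),
          setIntegral_union ?_ measurableSet_Ioc ?_ ?_]
        · exact Set.Ioc_disjoint_Ioc_of_le le_rfl
        · exact hint.mono_set (Set.Ioc_subset_Ioc (ha_mem 0 ω).1 (ha_mem n ω).2)
        · exact hint.mono_set (Set.Ioc_subset_Ioc (ha_mem n ω).1 (ha_mem (n+1) ω).2)
    have := key (N+1)
    rw [ha0 ω, haN ω] at this
    simpa using this
  have hce1 := condExp_congr_ae (m := hτ.measurableSpace) (μ := P) hdecomp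
  have hce2 : P[(∑ k ∈ Finset.range (N+1), g k) | hτ.measurableSpace]
      =ᵐ[P] ∑ k ∈ Finset.range (N+1), P[g k | hτ.measurableSpace] :=
    condExp_finsetSum (fun k _ => hgint k) _
  have hall : ∀ᵐ ω ∂P, ∀ k ∈ Finset.range (N+1),
      (P[g k | hτ.measurableSpace]) ω ≤ M := by
    rw [Filter.eventually_all_finset]
    intro k _
    exact hsmall (a k) (a (k+1)) τ (ha_st k) (ha_st (k+1)) hτ (ha_mem k) (ha_mem (k+1))
      (ha_mono k) (ha_diff k) (hτa k)
  filter_upwards [hce1, hce2, hall] with ω h1 h2 h3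
  rw [h1, h2]
  calc (∑ k ∈ Finset.range (N+1), P[g k | hτ.measurableSpace]) ω
      = ∑ k ∈ Finset.range (N+1), (P[g k | hτ.measurableSpace]) ω := by
        simp [Finset.sum_apply]
    _ ≤ ∑ _k ∈ Finset.range (N+1), M := Finset.sum_le_sum h3
    _ = ((N : ℝ) + 1) * M := by
        rw [Finset.sum_const, Finset.card_range, nsmul_eq_mul]
        push_cast; ring
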